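/- For h ∈ ℝ and q ∈ ℂ with h > |q|, the set M_{h,q} = {z ∈ ℂ³ : z·z = q, ‖z‖² = h} is a single SO(3)-orbit: for any z, w ∈ ℂ³ with z·z = q, w·w = q and ‖z‖² = ‖w‖² = h, there exists g ∈ SO(3) with g·z = w. -/

import Mathlib

open scoped BigOperators
open Matrix

private def frameM (e f : Fin 3 → ℝ) : Matrix (Fin 3) (Fin 3) ℝ :=
  Matrix.of fun i j => ![e, f, e ⨯₃ f] j i

private lemma frameM_mulVec (e f : Fin 3 → ℝ) (c : Fin 3 → ℝ) :
    (frameM e f).mulVec c = fun i => c 0 * e i + c 1 * f i + c 2 * (e ⨯₃ f) i := by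
  funext i
  simp [frameM, Matrix.mulVec, dotProduct, Fin.sum_univ_three]
  ring

private lemma frameM_orth (e f : Fin 3 → ℝ) (hee : e ⬝ᵥ e = 1) (hff : f ⬝ᵥ f = 1)
    (hef : e ⬝ᵥ f = 0) : (frameM e f).transpose * frameM e f = 1 := by
  have key : ∀ i j, ((frameM e f).transpose * frameM e f) i j = ![e, f, e ⨯₃ f] i ⬝ᵥ ![e, f, e ⨯₃ f] j := by
    intro i j
    simp [Matrix.mul_apply, Matrix.transpose_apply, frameM, dotProduct]
  have hfe : f ⬝ᵥ e = 0 := by rw [dotProduct_comm]; exact hef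
  have h1 : e ⬝ᵥ (e ⨯₃ f) = 0 := dot_self_cross e f
  have h2 : f ⬝ᵥ (e ⨯₃ f) = 0 := dot_cross_self e f
  have h1' : (e ⨯₃ f) ⬝ᵥ e = 0 := by rw [dotProduct_comm]; exact h1
  have h2' : (e ⨯₃ f) ⬝ᵥ f = 0 := by rw [dotProduct_comm]; exact h2
  have h3 : (e ⨯₃ f) ⬝ᵥ (e ⨯₃ f) = 1 := by
    rw [cross_dot_cross, hee, hff, hef, hfe]; ring
  ext i j
  rw [key]
  fin_cases i <;> fin_cases j <;>
    simp [Matrix.one_apply, hee, hff, hef, hfe, h1, h2, h1', h2', h3]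

private lemma frameM_det (e f : Fin 3 → ℝ) (hee : e ⬝ᵥ e = 1) (hff : f ⬝ᵥ f = 1)
    (hef : e ⬝ᵥ f = 0) : (frameM e f).det = 1 := by
  have hfe : f ⬝ᵥ e = 0 := by rw [dotProduct_comm]; exact hef
  have : (frameM e f).det = (e ⨯₃ f) ⬝ᵥ (e ⨯₃ f) := by
    simp [frameM, Matrix.det_fin_three, cross_apply, dotProduct, Fin.sum_univ_three]
    ring
  rw [this, cross_dot_cross, hee, hff, hef, hfe]; ring

/-- Gram–Schmidt: produce a rotation-frame matrix adapted to `x, y`. -/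
private lemma gram (x y : Fin 3 → ℝ) (A B C : ℝ) (hA : 0 < A) (hD : 0 < A * B - C ^ 2)
    (hxx : x ⬝ᵥ x = A) (hyy : y ⬝ᵥ y = B) (hxy : x ⬝ᵥ y = C) :
    ∃ E : Matrix (Fin 3) (Fin 3) ℝ, E.transpose * E = 1 ∧ E.det = 1 ∧
      E.mulVec ![Real.sqrt A, 0, 0] = x ∧
      E.mulVec ![C / Real.sqrt A, Real.sqrt ((A * B - C ^ 2) / A), 0] = y := by
  set sA := Real.sqrt A with hsA_def
  have hsA2 : sA ^ 2 = A := Real.sq_sqrt hA.le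
  have hsApos : 0 < sA := Real.sqrt_pos.2 hA
  have hc : 0 < (A * B - C ^ 2) / A := div_pos hD hA
  set sc := Real.sqrt ((A * B - C ^ 2) / A) with hsc_def
  have hsc2 : sc ^ 2 = (A * B - C ^ 2) / A := Real.sq_sqrt hc.le
  have hscpos : 0 < sc := Real.sqrt_pos.2 hc
  set e : Fin 3 → ℝ := fun i => sA⁻¹ * x i with he_def
  set f : Fin 3 → ℝ := fun i => sc⁻¹ * (y i - C / A * x i) with hf_def
  have hyx : y ⬝ᵥ x = C := by rw [dotProduct_comm]; exact hxy
  have dotsimp : ∀ (a b : Fin 3 → ℝ), a ⬝ᵥ b = a 0 * b 0 + a 1 * b 1 + a 2 * b 2 := by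
    intro a b; simp [dotProduct, Fin.sum_univ_three]
  have hee : e ⬝ᵥ e = 1 := by
    have h1 : e ⬝ᵥ e = sA⁻¹ * sA⁻¹ * (x ⬝ᵥ x) := by rw [dotsimp, dotsimp]; ring
    rw [h1, hxx, ← hsA2]; field_simp
  have hff : f ⬝ᵥ f = 1 := by
    have h1 : f ⬝ᵥ f = sc⁻¹ * sc⁻¹ * ((y ⬝ᵥ y) - 2 * (C / A) * (x ⬝ᵥ y) + (C / A) ^ 2 * (x ⬝ᵥ x)) := by
      rw [dotsimp, dotsimp, dotsimp, dotsimp]; ring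
    have inner : B - 2 * (C / A) * C + (C / A) ^ 2 * A = (A * B - C ^ 2) / A := by
      field_simp; ring
    rw [h1, hxx, hyy, hxy, inner, ← hsc2]
    field_simp
  have hef : e ⬝ᵥ f = 0 := by
    have h1 : e ⬝ᵥ f = sA⁻¹ * sc⁻¹ * ((x ⬝ᵥ y) - C / A * (x ⬝ᵥ x)) := by
      rw [dotsimp, dotsimp, dotsimp]; ring
    rw [h1, hxx, hxy]
    field_simp
    ring
  refine ⟨frameM e f, frameM_orth e f hee hff hef, frameM_det e f hee hff hef, ?_, ?_⟩
  · rw [frameM_mulVec]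
    funext i
    simp only [Matrix.cons_val_zero, Matrix.cons_val_one, Matrix.head_cons]
    show sA * e i + 0 * f i + 0 * (e ⨯₃ f) i = x i
    rw [he_def]
    field_simp
    ring
  · rw [frameM_mulVec]
    funext i
    simp only [Matrix.cons_val_zero, Matrix.cons_val_one, Matrix.head_cons]
    show C / sA * e i + sc * f i + 0 * (e ⨯₃ f) i = y i
    rw [he_def, hf_def]
    simp only []
    rw [← hsA2]
    field_simp
    ring

private lemma exists_rot (x y u v : Fin 3 → ℝ) (A B C : ℝ) (hA : 0 < A)
    (hD : 0 < A * B - C ^ 2)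
    (hxx : x ⬝ᵥ x = A) (hyy : y ⬝ᵥ y = B) (hxy : x ⬝ᵥ y = C)
    (huu : u ⬝ᵥ u = A) (hvv : v ⬝ᵥ v = B) (huv : u ⬝ᵥ v = C) :
    ∃ g : Matrix (Fin 3) (Fin 3) ℝ, g * g.transpose = 1 ∧ g.det = 1 ∧
      g.mulVec x = u ∧ g.mulVec y = v := by
  obtain ⟨E, hEo, hEd, hEx, hEy⟩ := gram x y A B C hA hD hxx hyy hxy
  obtain ⟨F, hFo, hFd, hFx, hFy⟩ := gram u v A B C hA hD huu hvv huv
  have hEo' : E * E.transpose = 1 := mul_eq_one_comm.mp hEo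
  have hFo' : F * F.transpose = 1 := mul_eq_one_comm.mp hFo
  refine ⟨F * E.transpose, ?_, ?_, ?_, ?_⟩
  · rw [Matrix.transpose_mul, Matrix.transpose_transpose, Matrix.mul_assoc,
      ← Matrix.mul_assoc E.transpose, hEo, Matrix.one_mul, hFo']
  · rw [Matrix.det_mul, Matrix.det_transpose, hEd, hFd, mul_one]
  · have hx' : E.transpose.mulVec x = ![Real.sqrt A, 0, 0] := by
      rw [← hEx, Matrix.mulVec_mulVec, hEo, Matrix.one_mulVec]
    rw [← hFx, ← hx', Matrix.mulVec_mulVec]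
  · have hy' : E.transpose.mulVec y = ![C / Real.sqrt A, Real.sqrt ((A * B - C ^ 2) / A), 0] := by
      rw [← hEy, Matrix.mulVec_mulVec, hEo, Matrix.one_mulVec]
    rw [← hFy, ← hy', Matrix.mulVec_mulVec]

/-- For `h > |q|`, the set `M_{h,q} = {z ∈ ℂ³ : z·z = q, ‖z‖² = h}` is a single
SO(3)-orbit. -/
theorem Mhq_single_SO3_orbit (h : ℝ) (q : ℂ) (hq : h > ‖q‖)
    (z w : Fin 3 → ℂ)
    (hz1 : ∑ i, z i * z i = q) (hz2 : ∑ i, ‖z i‖ ^ 2 = h)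
    (hw1 : ∑ i, w i * w i = q) (hw2 : ∑ i, ‖w i‖ ^ 2 = h) :
    ∃ g : Matrix (Fin 3) (Fin 3) ℝ,
      g * g.transpose = 1 ∧ g.det = 1 ∧
      (g.map (fun r => (r : ℂ))).mulVec z = w := by
  set x : Fin 3 → ℝ := fun i => (z i).re with hx_def
  set y : Fin 3 → ℝ := fun i => (z i).im with hy_def
  set u : Fin 3 → ℝ := fun i => (w i).re with hu_def
  set v : Fin 3 → ℝ := fun i => (w i).im with hv_def
  set A : ℝ := (h + q.re) / 2 with hA_def
  set B : ℝ := (h - q.re) / 2 with hB_def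
  set C : ℝ := q.im / 2 with hC_def
  -- extract real dot product data
  have norm_sq : ∀ (ζ : Fin 3 → ℂ), (∑ i, ‖ζ i‖ ^ 2) = ∑ i, ((ζ i).re ^ 2 + (ζ i).im ^ 2) := by
    intro ζ
    refine Finset.sum_congr rfl fun i _ => ?_
    rw [Complex.sq_norm, Complex.normSq_apply]; ring
  have key : ∀ (ζ : Fin 3 → ℂ), (∑ i, ζ i * ζ i = q) → (∑ i, ‖ζ i‖ ^ 2 = h) →
      (fun i => (ζ i).re) ⬝ᵥ (fun i => (ζ i).re) = A ∧
      (fun i => (ζ i).im) ⬝ᵥ (fun i => (ζ i).im) = B ∧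
      (fun i => (ζ i).re) ⬝ᵥ (fun i => (ζ i).im) = C := by
    intro ζ h1 h2
    have hre : ∑ i, ((ζ i).re ^ 2 - (ζ i).im ^ 2) = q.re := by
      rw [← h1, Complex.re_sum]
      refine Finset.sum_congr rfl fun i _ => ?_
      rw [Complex.mul_re]; ring
    have him : ∑ i, 2 * ((ζ i).re * (ζ i).im) = q.im := by
      rw [← h1, Complex.im_sum]
      refine Finset.sum_congr rfl fun i _ => ?_
      rw [Complex.mul_im]; ring
    have hsum : ∑ i, ((ζ i).re ^ 2 + (ζ i).im ^ 2) = h := by rw [← norm_sq ζ, h2]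
    have e1 : ∑ i, (ζ i).re ^ 2 = A := by
      have := Finset.sum_add_distrib (s := (Finset.univ : Finset (Fin 3)))
        (f := fun i => (ζ i).re ^ 2) (g := fun i => (ζ i).im ^ 2)
      have h3 : (∑ i, (ζ i).re ^ 2) + ∑ i, (ζ i).im ^ 2 = h := by rw [← this, hsum]
      have h4 : (∑ i, (ζ i).re ^ 2) - ∑ i, (ζ i).im ^ 2 = q.re := by
        rw [← Finset.sum_sub_distrib, hre]
      rw [hA_def]; linarith
    have e2 : ∑ i, (ζ i).im ^ 2 = B := by
      have h3 : (∑ i, (ζ i).re ^ 2) + ∑ i, (ζ i).im ^ 2 = h := by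
        rw [← Finset.sum_add_distrib, hsum]
      rw [hB_def]; linarith
    have e3 : ∑ i, (ζ i).re * (ζ i).im = C := by
      have h3 : ∑ i, 2 * ((ζ i).re * (ζ i).im) = 2 * ∑ i, (ζ i).re * (ζ i).im := by
        rw [Finset.mul_sum]
      rw [hC_def]; rw [h3] at him; linarith
    refine ⟨?_, ?_, ?_⟩
    · rw [dotProduct, ← e1]; exact Finset.sum_congr rfl fun i _ => by ring
    · rw [dotProduct, ← e2]; exact Finset.sum_congr rfl fun i _ => by ring
    · rw [dotProduct, ← e3]
  obtain ⟨hxx, hyy, hxy⟩ := key z hz1 hz2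
  obtain ⟨huu, hvv, huv⟩ := key w hw1 hw2
  have habs : |q.re| ≤ ‖q‖ := Complex.abs_re_le_norm q
  have hq0 : (0:ℝ) ≤ ‖q‖ := norm_nonneg q
  have hnormsq : ‖q‖ ^ 2 = q.re ^ 2 + q.im ^ 2 := by
    rw [Complex.sq_norm, Complex.normSq_apply]; ring
  have habs' := abs_le.mp habs
  have hA : 0 < A := by rw [hA_def]; linarith
  have hD : 0 < A * B - C ^ 2 := by
    have h2 : ‖q‖ ^ 2 < h ^ 2 := by nlinarith
    rw [hA_def, hB_def, hC_def]
    nlinarith [h2, hnormsq]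
  obtain ⟨g, hg1, hg2, hg3, hg4⟩ := exists_rot x y u v A B C hA hD hxx hyy hxy huu hvv huv
  refine ⟨g, hg1, hg2, ?_⟩
  funext i
  have hre : ((g.map (fun r => (r : ℂ))).mulVec z i).re = g.mulVec x i := by
    simp only [Matrix.mulVec, dotProduct, Matrix.map_apply]
    rw [Complex.re_sum]
    refine Finset.sum_congr rfl fun j _ => ?_
    simp [Complex.mul_re]
    exact Or.inl rfl
  have him : ((g.map (fun r => (r : ℂ))).mulVec z i).im = g.mulVec y i := by
    simp only [Matrix.mulVec, dotProduct, Matrix.map_apply]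
    rw [Complex.im_sum]
    refine Finset.sum_congr rfl fun j _ => ?_
    simp [Complex.mul_im]
    exact Or.inl rfl
  apply Complex.ext
  · rw [hre, hg3]
  · rw [him, hg4]
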